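/- Let X be a complex Banach space. If the underlying real normed space of X contains an isomorphic copy of the real space c₀ (i.e., there is a continuous real-linear map T from real c₀ into X and a constant a > 0 with a‖x‖ ≤ ‖T x‖ for all x), then X contains an isomorphic copy of the complex space c₀ (i.e., there is a continuous complex-linear map S from complex c₀ into X and a constant b > 0 with b‖x‖ ≤ ‖S x‖ for all x). -/

import Mathlib

open ZeroAtInfty Filter Metric BoundedContinuousFunction Topology

set_option maxHeartbeats 1000000
set_option synthInstance.maxHeartbeats 400000

namespace Stmt4Aux

noncomputable section

variable {E : Type*} [NormedAddCommGroup E]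

theorem c0_norm_apply_le (f : C₀(ℕ, E)) (n : ℕ) : ‖f n‖ ≤ ‖f‖ := by
  rw [← ZeroAtInftyContinuousMap.norm_toBCF_eq_norm]
  exact f.toBCF.norm_coe_le_norm n

theorem c0_norm_le (f : C₀(ℕ, E)) {C : ℝ} (hC : 0 ≤ C) (h : ∀ n, ‖f n‖ ≤ C) : ‖f‖ ≤ C := by
  rw [← ZeroAtInftyContinuousMap.norm_toBCF_eq_norm]
  exact (BoundedContinuousFunction.norm_le hC).2 h

theorem c0_tendsto (f : C₀(ℕ, E)) : Tendsto f atTop (𝓝 0) := by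
  have := f.zero_at_infty'
  rwa [cocompact_eq_cofinite, Nat.cofinite_eq_atTop] at this

def mk0 (f : ℕ → E) (h : Tendsto f atTop (𝓝 0)) : C₀(ℕ, E) :=
  ⟨⟨f, continuous_of_discreteTopology⟩, by
    rwa [cocompact_eq_cofinite, Nat.cofinite_eq_atTop]⟩

@[simp] theorem mk0_apply (f : ℕ → E) (h) (n : ℕ) : mk0 f h n = f n := rfl

def mkFinset (s : Finset ℕ) (f : ℕ → E) : C₀(ℕ, E) :=
  mk0 (fun m => if m ∈ s then f m else 0) (by
    have : ∀ᶠ m in atTop, (if m ∈ s then f m else 0) = 0 := by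
      refine eventually_atTop.2 ⟨s.sup id + 1, fun m hm => ?_⟩
      rw [if_neg]
      intro hms
      exact absurd (Finset.le_sup (f := id) hms) (by simp only [id]; omega)
    exact Tendsto.congr' (this.mono fun m hm => hm.symm) tendsto_const_nhds)

@[simp] theorem mkFinset_apply (s : Finset ℕ) (f : ℕ → E) (m : ℕ) :
    mkFinset s f m = if m ∈ s then f m else 0 := rfl

def single (m : ℕ) (c : E) : C₀(ℕ, E) := mkFinset {m} (fun _ => c)

theorem single_apply (m : ℕ) (c : E) (u : ℕ) :
    single m c u = if u = m then c else 0 := by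
  simp [single, Finset.mem_singleton]

theorem norm_single_le (m : ℕ) (c : E) : ‖single m c‖ ≤ ‖c‖ := by
  refine c0_norm_le _ (norm_nonneg c) fun u => ?_
  rw [single_apply]
  split <;> simp

theorem c0_sum_apply {ι : Type*} (s : Finset ι) (F : ι → C₀(ℕ, E)) (m : ℕ) :
    (∑ i ∈ s, F i) m = ∑ i ∈ s, F i m := by
  classical
  induction s using Finset.cons_induction with
  | empty => simp
  | cons i s his ih =>
    rw [Finset.sum_cons, Finset.sum_cons, ← ih]
    rfl

theorem mkFinset_eq_sum {𝕜 : Type*} [NormedField 𝕜] (s : Finset ℕ) (f : ℕ → 𝕜) :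
    mkFinset s f = ∑ t ∈ s, f t • single t (1 : 𝕜) := by
  ext m
  rw [c0_sum_apply, mkFinset_apply]
  have : ∀ t ∈ s, (f t • single t (1 : 𝕜)) m = if m = t then f t else 0 := by
    intro t _
    rw [ZeroAtInftyContinuousMap.smul_apply, single_apply]
    split <;> simp
  rw [Finset.sum_congr rfl this, Finset.sum_ite_eq s m f]


section Complexify

def reC0 (f : C₀(ℕ, ℂ)) : C₀(ℕ, ℝ) :=
  mk0 (fun n => (f n).re) (by simpa [Function.comp_def] using (Complex.continuous_re.tendsto 0).comp (c0_tendsto f))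

def imC0 (f : C₀(ℕ, ℂ)) : C₀(ℕ, ℝ) :=
  mk0 (fun n => (f n).im) (by simpa [Function.comp_def] using (Complex.continuous_im.tendsto 0).comp (c0_tendsto f))

@[simp] theorem reC0_apply (f : C₀(ℕ, ℂ)) (n : ℕ) : reC0 f n = (f n).re := rfl
@[simp] theorem imC0_apply (f : C₀(ℕ, ℂ)) (n : ℕ) : imC0 f n = (f n).im := rfl

theorem norm_reC0_le (f : C₀(ℕ, ℂ)) : ‖reC0 f‖ ≤ ‖f‖ := by
  refine c0_norm_le _ (norm_nonneg f) fun n => ?_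
  exact le_trans (by simpa using Complex.abs_re_le_norm (f n)) (c0_norm_apply_le f n)

theorem norm_imC0_le (f : C₀(ℕ, ℂ)) : ‖imC0 f‖ ≤ ‖f‖ := by
  refine c0_norm_le _ (norm_nonneg f) fun n => ?_
  exact le_trans (by simpa using Complex.abs_im_le_norm (f n)) (c0_norm_apply_le f n)

variable {X : Type*} [NormedAddCommGroup X] [NormedSpace ℂ X]

def Slin (T : C₀(ℕ, ℝ) →L[ℝ] X) : C₀(ℕ, ℂ) →ₗ[ℂ] X where
  toFun f := T (reC0 f) + Complex.I • T (imC0 f)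
  map_add' f g := by
    have hr : reC0 (f + g) = reC0 f + reC0 g := by ext n; simp
    have hi : imC0 (f + g) = imC0 f + imC0 g := by ext n; simp
    rw [hr, hi, map_add, map_add, smul_add]
    abel
  map_smul' c f := by
    have hr : reC0 (c • f) = c.re • reC0 f - c.im • imC0 f := by
      ext n; simp [Complex.mul_re]
    have hi : imC0 (c • f) = c.re • imC0 f + c.im • reC0 f := by
      ext n; simp [Complex.mul_im]
    rw [hr, hi, map_sub, map_add, map_smul, map_smul, map_smul, map_smul]
    set u := T (reC0 f)
    set v := T (imC0 f)
    have e1 : ∀ (r : ℝ) (w : X), r • w = (r : ℂ) • w := fun r w => (Complex.coe_smul r w).symm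
    rw [e1 c.re u, e1 c.im v, e1 c.re v, e1 c.im u, smul_add, smul_smul, smul_smul]
    simp only [RingHom.id_apply]
    rw [smul_add, smul_smul]
    match_scalars <;> simp [Complex.ext_iff]

def SL (T : C₀(ℕ, ℝ) →L[ℝ] X) : C₀(ℕ, ℂ) →L[ℂ] X :=
  (Slin T).mkContinuous (2 * ‖T‖) (by
    intro f
    have h1 : ‖T (reC0 f)‖ ≤ ‖T‖ * ‖f‖ :=
      le_trans (T.le_opNorm _) (by
        have := norm_reC0_le f
        nlinarith [norm_nonneg T, norm_nonneg (reC0 f)])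
    have h2 : ‖Complex.I • T (imC0 f)‖ ≤ ‖T‖ * ‖f‖ := by
      rw [norm_smul, Complex.norm_I, one_mul]
      exact le_trans (T.le_opNorm _) (by
        have := norm_imC0_le f
        nlinarith [norm_nonneg T, norm_nonneg (imC0 f)])
    calc ‖Slin T f‖ ≤ ‖T (reC0 f)‖ + ‖Complex.I • T (imC0 f)‖ := norm_add_le _ _
    _ ≤ 2 * ‖T‖ * ‖f‖ := by linarith)

@[simp] theorem SL_apply (T : C₀(ℕ, ℝ) →L[ℝ] X) (f : C₀(ℕ, ℂ)) :
    SL T f = T (reC0 f) + Complex.I • T (imC0 f) := rfl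

theorem SL_single_one (T : C₀(ℕ, ℝ) →L[ℝ] X) (m : ℕ) :
    SL T (single m (1 : ℂ)) = T (single m (1 : ℝ)) := by
  have hr : reC0 (single m (1 : ℂ)) = single m (1 : ℝ) := by
    ext n
    rw [reC0_apply, single_apply, single_apply]
    split <;> simp
  have hi : imC0 (single m (1 : ℂ)) = 0 := by
    ext n
    rw [imC0_apply, single_apply]
    split <;> simp
  rw [SL_apply, hr, hi, map_zero, smul_zero, add_zero]

end Complexify

section Trunc

def trunc (N : ℕ) (f : C₀(ℕ, ℂ)) : C₀(ℕ, ℂ) := mkFinset (Finset.range N) f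

theorem trunc_apply (N : ℕ) (f : C₀(ℕ, ℂ)) (m : ℕ) :
    trunc N f m = if m < N then f m else 0 := by
  simp [trunc]

theorem norm_trunc_le (N : ℕ) (f : C₀(ℕ, ℂ)) : ‖trunc N f‖ ≤ ‖f‖ := by
  refine c0_norm_le _ (norm_nonneg f) fun m => ?_
  rw [trunc_apply]
  split
  · exact c0_norm_apply_le f m
  · simp

theorem norm_sub_trunc_le (N : ℕ) (f : C₀(ℕ, ℂ)) {ε : ℝ} (hε : 0 ≤ ε)
    (h : ∀ m, N ≤ m → ‖f m‖ ≤ ε) : ‖f - trunc N f‖ ≤ ε := by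
  refine c0_norm_le _ hε fun m => ?_
  have : (f - trunc N f) m = f m - trunc N f m := rfl
  rw [this, trunc_apply]
  split
  · simp [hε]
  · rw [sub_zero]; exact h m (by omega)

end Trunc

section Vop

variable {n : ℕ → ℕ}

open Classical in
def Vfun (n : ℕ → ℕ) (f : C₀(ℕ, ℂ)) (m : ℕ) : ℂ :=
  if h : ∃ k, n k = m then f h.choose else 0

theorem Vfun_apply (hn : StrictMono n) (f : C₀(ℕ, ℂ)) (k : ℕ) : Vfun n f (n k) = f k := by
  have h : ∃ k', n k' = n k := ⟨k, rfl⟩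
  rw [Vfun, dif_pos h, hn.injective h.choose_spec]

theorem Vfun_apply_of_not (f : C₀(ℕ, ℂ)) {m : ℕ} (h : ¬ ∃ k, n k = m) :
    Vfun n f m = 0 := dif_neg h

theorem norm_Vfun_le (f : C₀(ℕ, ℂ)) (m : ℕ) : ‖Vfun n f m‖ ≤ ‖f‖ := by
  rw [Vfun]
  split
  · exact c0_norm_apply_le f _
  · simp

theorem Vfun_tendsto (hn : StrictMono n) (f : C₀(ℕ, ℂ)) : Tendsto (Vfun n f) atTop (𝓝 0) := by
  rw [NormedAddCommGroup.tendsto_nhds_zero]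
  intro ε hε
  obtain ⟨K, hK⟩ := (eventually_atTop).1
    ((NormedAddCommGroup.tendsto_nhds_zero.1 (c0_tendsto f)) ε hε)
  refine eventually_atTop.2 ⟨n K, fun m hm => ?_⟩
  rw [Vfun]
  split
  · next h =>
    refine hK _ ?_
    have := h.choose_spec
    have : n K ≤ n h.choose := by omega
    exact (hn.le_iff_le).1 this
  · simpa using hε

def VL (hn : StrictMono n) : C₀(ℕ, ℂ) →L[ℂ] C₀(ℕ, ℂ) :=
  LinearMap.mkContinuous
    { toFun := fun f => mk0 (Vfun n f) (Vfun_tendsto hn f)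
      map_add' := fun f g => by
        ext m
        show Vfun n (f + g) m = Vfun n f m + Vfun n g m
        rw [Vfun, Vfun, Vfun]
        split
        · next h => show (f + g) h.choose = _; simp
        · simp
      map_smul' := fun c f => by
        ext m
        show Vfun n (c • f) m = c • Vfun n f m
        rw [Vfun, Vfun]
        split
        · next h => show (c • f) h.choose = _; simp
        · simp }
    1 (fun f => by
      rw [one_mul]
      exact c0_norm_le _ (norm_nonneg f) fun m => norm_Vfun_le f m)

theorem VL_apply (hn : StrictMono n) (f : C₀(ℕ, ℂ)) (m : ℕ) : VL hn f m = Vfun n f m := rfl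

theorem VL_trunc (hn : StrictMono n) (f : C₀(ℕ, ℂ)) (N : ℕ) :
    VL hn (trunc N f) = ∑ j ∈ Finset.range N, f j • single (n j) (1 : ℂ) := by
  ext m
  rw [c0_sum_apply, VL_apply]
  have hterm : ∀ j ∈ Finset.range N, (f j • single (n j) (1 : ℂ)) m
      = if m = n j then f j else 0 := by
    intro j _
    rw [ZeroAtInftyContinuousMap.smul_apply, single_apply]
    split <;> simp
  rw [Finset.sum_congr rfl hterm]
  by_cases h : ∃ k, n k = m
  · obtain ⟨k, rfl⟩ := h
    rw [Vfun_apply hn, trunc_apply]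
    have : ∀ j ∈ Finset.range N, (if n k = n j then f j else 0) = if k = j then f j else 0 := by
      intro j _
      congr 1
      simp [hn.injective.eq_iff]
    rw [Finset.sum_congr rfl this, Finset.sum_ite_eq (Finset.range N) k f]
    simp
  · rw [Vfun_apply_of_not (trunc N f) h]
    refine (Finset.sum_eq_zero fun j _ => ?_).symm
    rw [if_neg]
    intro hmj
    exact h ⟨j, hmj.symm⟩

end Vop

section Eval

def evalL (k : ℕ) : C₀(ℕ, ℂ) →L[ℂ] ℂ :=
  LinearMap.mkContinuous
    { toFun := fun f => f k
      map_add' := fun f g => rfl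
      map_smul' := fun c f => rfl }
    1 (fun f => by rw [one_mul]; exact c0_norm_apply_le f k)

@[simp] theorem evalL_apply (k : ℕ) (f : C₀(ℕ, ℂ)) : evalL k f = f k := rfl

end Eval

section Main

variable {X : Type*} [NormedAddCommGroup X] [NormedSpace ℂ X]
variable (T : C₀(ℕ, ℝ) →L[ℝ] X) {a : ℝ}

def xv (m : ℕ) : X := T (single m (1 : ℝ))

theorem norm_xv_le (m : ℕ) : ‖xv T m‖ ≤ ‖T‖ := by
  refine le_trans (T.le_opNorm _) ?_
  have h := norm_single_le m (1 : ℝ)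
  rw [norm_one] at h
  nlinarith [norm_nonneg T, norm_nonneg (single m (1:ℝ))]

theorem dist_xv (hT : ∀ x : C₀(ℕ, ℝ), a * ‖x‖ ≤ ‖T x‖) {m m' : ℕ} (ha : 0 < a)
    (h : m ≠ m') : a ≤ ‖xv T m - xv T m'‖ := by
  have h1 : xv T m - xv T m' = T (single m 1 - single m' 1) := (map_sub T _ _).symm
  have h2 : (1 : ℝ) ≤ ‖(single m (1:ℝ) - single m' (1:ℝ) : C₀(ℕ, ℝ))‖ := by
    have he : ((single m (1:ℝ) - single m' (1:ℝ) : C₀(ℕ, ℝ))) m = 1 := by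
      rw [ZeroAtInftyContinuousMap.sub_apply, single_apply, single_apply, if_pos rfl, if_neg h]
      simp
    have := c0_norm_apply_le (single m (1:ℝ) - single m' (1:ℝ)) m
    rw [he] at this
    simpa using this
  have := hT (single m 1 - single m' 1)
  rw [← h1] at this
  nlinarith

theorem summable_real (f : X →L[ℝ] ℝ) : Summable fun t => |f (xv T t)| := by
  refine summable_of_sum_le (c := ‖f‖ * ‖T‖) (fun t => abs_nonneg _) fun u => ?_
  classical
  set σ : ℕ → ℝ := fun t => if 0 ≤ f (xv T t) then 1 else -1 with hσ
  set w := mkFinset u σ with hw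
  have hwn : ‖w‖ ≤ 1 := by
    refine c0_norm_le _ zero_le_one fun m => ?_
    rw [hw, mkFinset_apply]
    split
    · rw [hσ]; simp only; split <;> simp
    · simp
  have hTw : T w = ∑ t ∈ u, σ t • xv T t := by
    rw [hw, mkFinset_eq_sum, map_sum]
    exact Finset.sum_congr rfl fun t _ => T.map_smul _ _
  have hsum : ∑ t ∈ u, |f (xv T t)| = f (T w) := by
    rw [hTw, map_sum]
    refine Finset.sum_congr rfl fun t _ => ?_
    rw [f.map_smul, hσ]
    simp only [smul_eq_mul]
    split
    · next hpos => rw [abs_of_nonneg hpos, one_mul]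
    · next hneg => rw [abs_of_neg (by linarith [lt_of_not_ge hneg]), neg_one_mul]
  rw [hsum]
  calc f (T w) ≤ |f (T w)| := le_abs_self _
  _ ≤ ‖f‖ * ‖T w‖ := f.le_opNorm _
  _ ≤ ‖f‖ * (‖T‖ * ‖w‖) := by
      have := T.le_opNorm w
      nlinarith [norm_nonneg f]
  _ ≤ ‖f‖ * ‖T‖ := by
      rw [← mul_assoc]
      exact mul_le_of_le_one_right (mul_nonneg (norm_nonneg f) (norm_nonneg T)) hwn

theorem summable_xv (g : X →L[ℂ] ℂ) : Summable fun t => ‖g (xv T t)‖ := by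
  set f1 : X →L[ℝ] ℝ := Complex.reCLM.comp (g.restrictScalars ℝ)
  set f2 : X →L[ℝ] ℝ := Complex.imCLM.comp (g.restrictScalars ℝ)
  refine Summable.of_nonneg_of_le (fun t => norm_nonneg _) (fun t => ?_)
    ((summable_real T f1).add (summable_real T f2))
  have : ‖g (xv T t)‖ ≤ |(g (xv T t)).re| + |(g (xv T t)).im| :=
    Complex.norm_le_abs_re_add_abs_im _
  simpa [f1, f2] using this

theorem exists_far (ha : 0 < a) (hT : ∀ x : C₀(ℕ, ℝ), a * ‖x‖ ≤ ‖T x‖)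
    (F : Submodule ℂ X) [FiniteDimensional ℂ F] (N : ℕ) :
    ∃ m, N ≤ m ∧ a/3 ≤ infDist (xv T m) (F : Set X) := by
  by_contra hcon
  push_neg at hcon
  have hne : (F : Set X).Nonempty := ⟨0, F.zero_mem⟩
  have hy : ∀ i : ℕ, ∃ y ∈ (F : Set X), dist (xv T (N + i)) y < a/3 := fun i =>
    (infDist_lt_iff hne).1 (hcon (N + i) (by omega))
  choose y hyF hyd using hy
  set z : ℕ → F := fun i => ⟨y i, hyF i⟩ with hz
  have hzb : ∀ i, z i ∈ closedBall (0 : F) (‖T‖ + a/3) := by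
    intro i
    rw [mem_closedBall, dist_zero_right]
    have h1 : ‖y i‖ - ‖xv T (N + i)‖ ≤ ‖y i - xv T (N + i)‖ := norm_sub_norm_le _ _
    have h2 : ‖y i - xv T (N + i)‖ = dist (xv T (N + i)) (y i) := by
      rw [dist_eq_norm, ← norm_neg]; congr 1; abel
    have h3 := norm_xv_le T (N + i)
    have h4 := hyd i
    have : ‖(z i : X)‖ = ‖z i‖ := rfl
    show ‖z i‖ ≤ _
    rw [← this]
    simp only [hz]
    linarith
  obtain ⟨b, -, φ, hφ, hconv⟩ := tendsto_subseq_of_bounded isBounded_closedBall hzb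
  obtain ⟨K, hK⟩ := (Metric.tendsto_atTop.1 hconv) (a/6) (by linarith)
  have h1 := hK K le_rfl
  have h2 := hK (K + 1) (by omega)
  have hneq : N + φ K ≠ N + φ (K + 1) := by
    have := hφ (by omega : K < K + 1); omega
  have hdz : dist (z (φ K)) (z (φ (K + 1))) < a/3 := by
    have ht := dist_triangle_right (z (φ K)) (z (φ (K + 1))) b
    simp only [Function.comp] at h1 h2
    linarith
  have hdy : dist (y (φ K)) (y (φ (K + 1))) < a/3 := by
    have : dist (z (φ K)) (z (φ (K + 1))) = dist (y (φ K)) (y (φ (K + 1))) := rfl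
    linarith
  have hlt : dist (xv T (N + φ K)) (xv T (N + φ (K + 1))) < a := by
    calc dist (xv T (N + φ K)) (xv T (N + φ (K + 1)))
        ≤ dist (xv T (N + φ K)) (y (φ K)) + dist (y (φ K)) (xv T (N + φ (K + 1))) :=
          dist_triangle _ _ _
    _ ≤ dist (xv T (N + φ K)) (y (φ K)) + (dist (y (φ K)) (y (φ (K + 1)))
          + dist (y (φ (K + 1))) (xv T (N + φ (K + 1)))) := by
          linarith [dist_triangle (y (φ K)) (y (φ (K + 1))) (xv T (N + φ (K + 1)))]
    _ < a := by
          have := hyd (φ K)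
          have := hyd (φ (K + 1))
          rw [dist_comm (y (φ (K + 1)))] at *
          linarith
  have hge : a ≤ dist (xv T (N + φ K)) (xv T (N + φ (K + 1))) := by
    rw [dist_eq_norm]
    exact dist_xv T hT ha hneq
  linarith

theorem exists_functional (ha : 0 < a) (F : Submodule ℂ X) [FiniteDimensional ℂ F] (v : X)
    (hd : a/3 ≤ infDist v (F : Set X)) :
    ∃ g : X →L[ℂ] ℂ, ‖g‖ ≤ 3/a ∧ g v = 1 ∧ ∀ w ∈ F, g w = 0 := by
  haveI : IsClosed (F : Set X) := F.closed_of_finiteDimensional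
  set πL : X →L[ℂ] X ⧸ F :=
    LinearMap.mkContinuous F.mkQ 1
      (fun w => by simpa using Submodule.Quotient.norm_mk_le F w) with hπL
  have hπ : ∀ w : X, πL w = Submodule.Quotient.mk w := fun w => rfl
  have hπnorm : ‖πL‖ ≤ 1 := LinearMap.mkContinuous_norm_le _ zero_le_one _
  have hlow : a/3 ≤ ‖πL v‖ := by
    refine le_trans hd (le_of_forall_pos_le_add fun ε hε => ?_)
    obtain ⟨m, hm, hmlt⟩ := Submodule.Quotient.norm_mk_lt (πL v) hε
    have hmem : v - m ∈ F := by
      rw [hπ] at hm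
      have := (Submodule.Quotient.eq F).1 hm
      simpa using F.neg_mem this
    have hle : infDist v (F : Set X) ≤ dist v (v - m) :=
      infDist_le_dist_of_mem hmem
    rw [dist_eq_norm] at hle
    simp only [sub_sub_cancel] at hle
    linarith
  have hc : (0 : ℝ) < ‖πL v‖ := by linarith
  have hvne : πL v ≠ 0 := by
    intro h0; rw [h0, norm_zero] at hc; linarith
  obtain ⟨G, hG1, hG2⟩ := exists_dual_vector ℂ (πL v) (norm_ne_zero_iff.2 hvne)
  set g0 : X →L[ℂ] ℂ := ((‖πL v‖ : ℂ))⁻¹ • (G.comp πL) with hg0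
  refine ⟨g0, ?_, ?_, ?_⟩
  · have h1 : ‖g0‖ ≤ ‖((‖πL v‖ : ℂ))⁻¹‖ * ‖G.comp πL‖ := by
      rw [hg0]
      exact norm_smul_le ((‖πL v‖ : ℂ)⁻¹) (G.comp πL)
    have h2 : ‖G.comp πL‖ ≤ ‖G‖ * ‖πL‖ := ContinuousLinearMap.opNorm_comp_le _ _
    have h3 : ‖((‖πL v‖ : ℂ))⁻¹‖ = ‖πL v‖⁻¹ := by
      rw [norm_inv, Complex.norm_real, Real.norm_of_nonneg (norm_nonneg _)]
    have h4 : ‖πL v‖⁻¹ ≤ 3/a := by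
      rw [div_eq_mul_inv]
      have := inv_anti₀ (by linarith : (0:ℝ) < a/3) hlow
      calc ‖πL v‖⁻¹ ≤ (a/3)⁻¹ := this
      _ = 3 * a⁻¹ := by field_simp
    rw [hG1] at h2
    calc ‖g0‖ ≤ ‖((‖πL v‖ : ℂ))⁻¹‖ * ‖G.comp πL‖ := h1
    _ ≤ ‖πL v‖⁻¹ * 1 := by rw [h3]; nlinarith [norm_nonneg (G.comp πL), inv_nonneg.2 (norm_nonneg (πL v))]
    _ ≤ 3/a := by rw [mul_one]; exact h4
  · show ((‖πL v‖ : ℂ))⁻¹ • (G (πL v)) = 1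
    rw [hG2, smul_eq_mul]
    apply inv_mul_cancel₀
    intro hzero
    rw [Complex.ofReal_eq_zero] at hzero
    exact (ne_of_gt hc) hzero
  · intro w hw
    show ((‖πL v‖ : ℂ))⁻¹ • (G (πL w)) = 0
    have : πL w = 0 := by rw [hπ]; exact (Submodule.Quotient.mk_eq_zero F).2 hw
    rw [this, map_zero, smul_zero]

end Main

end

end Stmt4Aux

open ZeroAtInfty
open Stmt4Aux Filter Metric Topology

/-- Let `X` be a complex Banach space. If the underlying real normed
space of `X` contains an isomorphic copy of the real space `c₀` (realized as
`C₀(ℕ, ℝ)`, real sequences converging to zero with the sup norm), i.e. there is a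
continuous real-linear map `T : c₀(ℝ) → X` bounded below, then `X` contains an
isomorphic copy of the complex space `c₀` (realized as `C₀(ℕ, ℂ)`), i.e. there is a
continuous complex-linear map `S : c₀(ℂ) → X` bounded below. -/
theorem stmt_4 (X : Type*) [NormedAddCommGroup X] [NormedSpace ℂ X] [CompleteSpace X]
    (T : C₀(ℕ, ℝ) →L[ℝ] X) (a : ℝ) (ha : 0 < a)
    (hT : ∀ x : C₀(ℕ, ℝ), a * ‖x‖ ≤ ‖T x‖) :
    ∃ (S : C₀(ℕ, ℂ) →L[ℂ] X) (b : ℝ), 0 < b ∧ ∀ x : C₀(ℕ, ℂ), b * ‖x‖ ≤ ‖S x‖ := by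
  classical
  have hstep : ∀ s : Finset (ℕ × (X →L[ℂ] ℂ)),
      (∀ p ∈ s, ‖p.2‖ ≤ 3 / a ∧ p.2 (xv T p.1) = 1) →
      ∃ q : ℕ × (X →L[ℂ] ℂ), (‖q.2‖ ≤ 3 / a ∧ q.2 (xv T q.1) = 1) ∧ ∀ p ∈ s,
        p.1 < q.1 ∧ q.2 (xv T p.1) = 0 ∧ (∑' t : ℕ, ‖p.2 (xv T (t + q.1))‖) ≤ 4⁻¹ := by
    intro s _
    have hev1 : ∀ᶠ m in atTop, ∀ p ∈ s, (∑' t : ℕ, ‖p.2 (xv T (t + m))‖) ≤ 4⁻¹ := by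
      rw [eventually_all_finset]
      intro p _
      have h0 : Tendsto (fun m => ∑' t : ℕ, ‖p.2 (xv T (t + m))‖) atTop (𝓝 0) :=
        tendsto_sum_nat_add (fun t => ‖p.2 (xv T t)‖)
      exact h0.eventually (eventually_le_nhds (by norm_num))
    have hev2 : ∀ᶠ m in atTop, ∀ p ∈ s, p.1 < m := by
      rw [eventually_all_finset]; exact fun p _ => eventually_gt_atTop p.1
    obtain ⟨N, hN⟩ := eventually_atTop.1 (hev1.and hev2)
    set F : Submodule ℂ X :=
      Submodule.span ℂ ((fun p => xv T p.1) '' (s : Set (ℕ × (X →L[ℂ] ℂ)))) with hF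
    haveI : FiniteDimensional ℂ F := FiniteDimensional.span_of_finite ℂ (s.finite_toSet.image _)
    obtain ⟨m, hmN, hmfar⟩ := exists_far T ha hT F N
    obtain ⟨g, hg1, hg2, hg3⟩ := exists_functional ha F (xv T m) hmfar
    refine ⟨(m, g), ⟨hg1, hg2⟩, fun p hp => ⟨(hN m hmN).2 p hp, ?_, (hN m hmN).1 p hp⟩⟩
    refine hg3 _ ?_
    rw [hF]
    exact Submodule.subset_span ⟨p, hp, rfl⟩
  obtain ⟨f, hfP, hfr⟩ := exists_seq_of_forall_finset_exists
    (fun p : ℕ × (X →L[ℂ] ℂ) => ‖p.2‖ ≤ 3 / a ∧ p.2 (xv T p.1) = 1)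
    (fun p q => p.1 < q.1 ∧ q.2 (xv T p.1) = 0 ∧ (∑' t : ℕ, ‖p.2 (xv T (t + q.1))‖) ≤ 4⁻¹)
    hstep
  have hmono : StrictMono fun k => (f k).1 := fun i j hij => (hfr i j hij).1
  set S' : C₀(ℕ, ℂ) →L[ℂ] X := (SL T).comp (VL hmono) with hS'
  have hS'trunc : ∀ (μ : C₀(ℕ, ℂ)) (N : ℕ),
      S' (trunc N μ) = ∑ j ∈ Finset.range N, μ j • xv T ((f j).1) := by
    intro μ N
    show SL T (VL hmono (trunc N μ)) = _
    rw [VL_trunc hmono, map_sum]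
    exact Finset.sum_congr rfl fun j _ => by rw [map_smul, SL_single_one]; rfl
  have keyA : ∀ (k N : ℕ) (μ : C₀(ℕ, ℂ)),
      ‖(f k).2 (S' (trunc N μ)) - trunc N μ k‖ ≤ 4⁻¹ * ‖μ‖ := by
    intro k N μ
    rw [hS'trunc, map_sum]
    have hterm : ∀ j ∈ Finset.range N,
        (f k).2 (μ j • xv T ((f j).1)) = μ j * (f k).2 (xv T ((f j).1)) := by
      intro j _
      rw [map_smul, smul_eq_mul]
    rw [Finset.sum_congr rfl hterm, trunc_apply]
    by_cases hkN : k < N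
    · rw [if_pos hkN]
      have hksub : k ∈ Finset.range N := Finset.mem_range.2 hkN
      rw [← Finset.sum_erase_add _ _ hksub, (hfP k).2, mul_one, add_sub_cancel_right]
      have hb : ∀ j ∈ (Finset.range N).erase k,
          ‖μ j * (f k).2 (xv T ((f j).1))‖
            ≤ ‖μ‖ * (if k < j then ‖(f k).2 (xv T ((f j).1))‖ else 0) := by
        intro j hj
        obtain ⟨hjk, _⟩ := Finset.mem_erase.1 hj
        by_cases hlt : k < j
        · rw [if_pos hlt, norm_mul]
          exact mul_le_mul_of_nonneg_right (c0_norm_apply_le μ j) (norm_nonneg _)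
        · have hjlt : j < k := by omega
          rw [if_neg hlt, (hfr j k hjlt).2.1, mul_zero, norm_zero, mul_zero]
      have htailb : ∑ j ∈ (Finset.range N).erase k,
          (if k < j then ‖(f k).2 (xv T ((f j).1))‖ else 0) ≤ 4⁻¹ := by
        have hsplit : ∑ j ∈ (Finset.range N).erase k,
            (if k < j then ‖(f k).2 (xv T ((f j).1))‖ else 0)
            = ∑ j ∈ ((Finset.range N).erase k).filter (fun j => k < j),
                ‖(f k).2 (xv T ((f j).1))‖ := (Finset.sum_filter _ _).symm
        rw [hsplit]
        set A := ((Finset.range N).erase k).filter (fun j => k < j) with hA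
        set c := (f (k+1)).1 with hc
        have hjc : ∀ j ∈ A, c ≤ (f j).1 := by
          intro j hj
          have hkj : k < j := (Finset.mem_filter.1 hj).2
          rcases Nat.lt_or_ge j (k + 2) with h | h
          · have hj : j = k + 1 := by omega
            exact le_of_eq (by rw [hc, hj])
          · exact le_of_lt (hmono (by omega : k + 1 < j))
        have hinj : ∀ i ∈ A, ∀ j ∈ A, (f i).1 - c = (f j).1 - c → i = j := by
          intro i hi j hj hij
          have h1 := hjc i hi
          have h2 := hjc j hj
          exact hmono.injective (by omega)
        have hre : ∑ j ∈ A, ‖(f k).2 (xv T ((f j).1))‖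
            = ∑ u ∈ A.image (fun j => (f j).1 - c), ‖(f k).2 (xv T (u + c))‖ := by
          rw [Finset.sum_image hinj]
          exact Finset.sum_congr rfl fun j hj => by rw [Nat.sub_add_cancel (hjc j hj)]
        rw [hre]
        have hsummable : Summable fun t => ‖(f k).2 (xv T (t + c))‖ :=
          (summable_nat_add_iff c).2 (summable_xv T ((f k).2))
        calc ∑ u ∈ A.image (fun j => (f j).1 - c), ‖(f k).2 (xv T (u + c))‖
            ≤ ∑' t : ℕ, ‖(f k).2 (xv T (t + c))‖ :=
              Summable.sum_le_tsum _ (fun _ _ => norm_nonneg _) hsummable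
        _ ≤ 4⁻¹ := (hfr k (k+1) (lt_add_one k)).2.2
      calc ‖∑ j ∈ (Finset.range N).erase k, μ j * (f k).2 (xv T ((f j).1))‖
          ≤ ∑ j ∈ (Finset.range N).erase k, ‖μ j * (f k).2 (xv T ((f j).1))‖ := norm_sum_le _ _
      _ ≤ ∑ j ∈ (Finset.range N).erase k,
            ‖μ‖ * (if k < j then ‖(f k).2 (xv T ((f j).1))‖ else 0) := Finset.sum_le_sum hb
      _ = ‖μ‖ * ∑ j ∈ (Finset.range N).erase k,
            (if k < j then ‖(f k).2 (xv T ((f j).1))‖ else 0) := by rw [Finset.mul_sum]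
      _ ≤ ‖μ‖ * 4⁻¹ := mul_le_mul_of_nonneg_left htailb (norm_nonneg μ)
      _ = 4⁻¹ * ‖μ‖ := mul_comm _ _
    · rw [if_neg hkN, sub_zero]
      have hz : ∀ j ∈ Finset.range N, μ j * (f k).2 (xv T ((f j).1)) = 0 := by
        intro j hj
        have hjk : j < k := by have := Finset.mem_range.1 hj; omega
        rw [(hfr j k hjk).2.1, mul_zero]
      rw [Finset.sum_eq_zero hz, norm_zero]
      positivity
  have keyB : ∀ (k : ℕ) (μ : C₀(ℕ, ℂ)), ‖(f k).2 (S' μ) - μ k‖ ≤ 4⁻¹ * ‖μ‖ := by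
    intro k μ
    refine le_of_forall_pos_le_add fun δ hδ => ?_
    set h := ((f k).2).comp S' with hh
    have hε : (0:ℝ) < δ / (‖h‖ + 1) := div_pos hδ (by positivity)
    obtain ⟨N, hNs⟩ := eventually_atTop.1
      ((NormedAddCommGroup.tendsto_nhds_zero.1 (c0_tendsto μ)) _ hε)
    have htr : ‖μ - trunc N μ‖ ≤ δ / (‖h‖ + 1) :=
      norm_sub_trunc_le N μ (le_of_lt hε) (fun m hm => le_of_lt (hNs m hm))
    have hdecomp : (f k).2 (S' μ) - μ k
        = ((f k).2 (S' (μ - trunc N μ)) - (μ - trunc N μ) k)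
          + ((f k).2 (S' (trunc N μ)) - trunc N μ k) := by
      rw [map_sub S', map_sub ((f k).2)]
      have hsub : (μ - trunc N μ) k = μ k - trunc N μ k := rfl
      rw [hsub]
      ring
    have hA1 : ‖(f k).2 (S' (μ - trunc N μ))‖ ≤ ‖h‖ * ‖μ - trunc N μ‖ :=
      h.le_opNorm (μ - trunc N μ)
    have hA2 : ‖(μ - trunc N μ) k‖ ≤ ‖μ - trunc N μ‖ := c0_norm_apply_le _ k
    have hA : ‖(f k).2 (S' (μ - trunc N μ)) - (μ - trunc N μ) k‖
        ≤ (‖h‖ + 1) * (δ / (‖h‖ + 1)) := by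
      have h1 := norm_sub_le ((f k).2 (S' (μ - trunc N μ))) ((μ - trunc N μ) k)
      have h2 : ‖h‖ * ‖μ - trunc N μ‖ ≤ ‖h‖ * (δ / (‖h‖ + 1)) :=
        mul_le_mul_of_nonneg_left htr (norm_nonneg h)
      nlinarith [norm_nonneg h]
    have hAδ : (‖h‖ + 1) * (δ / (‖h‖ + 1)) = δ := by
      field_simp
    have hB := keyA k N μ
    calc ‖(f k).2 (S' μ) - μ k‖
        = ‖((f k).2 (S' (μ - trunc N μ)) - (μ - trunc N μ) k)
            + ((f k).2 (S' (trunc N μ)) - trunc N μ k)‖ := by rw [hdecomp]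
    _ ≤ ‖(f k).2 (S' (μ - trunc N μ)) - (μ - trunc N μ) k‖
          + ‖(f k).2 (S' (trunc N μ)) - trunc N μ k‖ := norm_add_le _ _
    _ ≤ 4⁻¹ * ‖μ‖ + δ := by rw [← hAδ]; linarith
  have hfinal : ∀ μ : C₀(ℕ, ℂ), a / 4 * ‖μ‖ ≤ ‖S' μ‖ := by
    intro μ
    have hb : ∀ k, ‖μ k‖ ≤ 3 / a * ‖S' μ‖ + 4⁻¹ * ‖μ‖ := by
      intro k
      have h1 : ‖μ k‖ ≤ ‖(f k).2 (S' μ)‖ + ‖(f k).2 (S' μ) - μ k‖ := by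
        calc ‖μ k‖ = ‖(f k).2 (S' μ) - ((f k).2 (S' μ) - μ k)‖ := by congr 1; ring
        _ ≤ _ := norm_sub_le _ _
      have h2 : ‖(f k).2 (S' μ)‖ ≤ 3 / a * ‖S' μ‖ :=
        le_trans (((f k).2).le_opNorm _)
          (mul_le_mul_of_nonneg_right (hfP k).1 (norm_nonneg _))
      linarith [keyB k μ]
    have hnorm : ‖μ‖ ≤ 3 / a * ‖S' μ‖ + 4⁻¹ * ‖μ‖ :=
      c0_norm_le μ
        (add_nonneg (mul_nonneg (div_nonneg (by norm_num) ha.le) (norm_nonneg _))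
          (mul_nonneg (by norm_num) (norm_nonneg _))) hb
    have h4 : (3:ℝ) / 4 * ‖μ‖ ≤ 3 / a * ‖S' μ‖ := by linarith
    have h5 : a * (3 / 4 * ‖μ‖) ≤ a * (3 / a * ‖S' μ‖) :=
      mul_le_mul_of_nonneg_left h4 ha.le
    have h6 : a * (3 / a * ‖S' μ‖) = 3 * ‖S' μ‖ := by field_simp
    rw [h6] at h5
    linarith
  exact ⟨S', a / 4, by positivity, hfinal⟩
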